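/- Let p ≥ 2 and set a = √(p²−p+1)/(2√(p−1)). Define r : {(ξ,y) : ξ ≠ 0} → ℝ³ by r₁ = (1/√(3(p−1)))·(√(p²−p+1)·coth(a ξ) − 1)·e^{ξ/(2√(p−1)) + (2p−1)y/(2√(3(p−1)))}, r₂ = (1/√(3(p−1)))·(√(p²−p+1)·coth(a ξ) − (p−1))·e^{(√(p−1)/2)ξ − (p+1)y/(2√(3(p−1)))}, r₃ = −(1/(√3 p))·(√(p²−p+1)·coth(a ξ) + p)·e^{−(p/(2√(p−1)))ξ − (p−2)y/(2√(3(p−1)))}. Then each component satisfies ∂²r/∂ξ² + ∂²r/∂y² = ((p²−p+1)/(2(p−1)))·(coth²(a ξ) − 1/3)·r for all ξ ≠ 0, y ∈ ℝ. -/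

import Mathlib

/-- Real hyperbolic cotangent. -/
noncomputable def coth (x : ℝ) : ℝ := Real.cosh x / Real.sinh x

lemma hasDerivAt_coth {x : ℝ} (hx : x ≠ 0) :
    HasDerivAt coth (1 - coth x ^ 2) x := by
  have hs : Real.sinh x ≠ 0 := fun h => hx (Real.sinh_eq_zero.mp h)
  have h := (Real.hasDerivAt_cosh x).div (Real.hasDerivAt_sinh x) hs
  refine h.congr_deriv ?_
  unfold coth
  field_simp

lemma hasDerivAt_coth_comp (a : ℝ) {s : ℝ} (h : a * s ≠ 0) :
    HasDerivAt (fun t => coth (a * t)) (a * (1 - coth (a * s) ^ 2)) s := by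
  have := (hasDerivAt_coth h).comp s ((hasDerivAt_id s).const_mul a)
  simpa [mul_comm, Function.comp_def] using this

lemma hasDerivAt_exp_affine (α d s : ℝ) :
    HasDerivAt (fun t => Real.exp (α * t + d)) (α * Real.exp (α * s + d)) s := by
  have := (((hasDerivAt_id s).const_mul α).add_const d).exp
  simpa [mul_comm] using this

lemma second_deriv_x (a A B α d : ℝ) {ξ : ℝ} (hξ : a * ξ ≠ 0) :
    deriv (deriv fun s => (A * coth (a * s) + B) * Real.exp (α * s + d)) ξ
      = (-(2 * A * a ^ 2 * coth (a * ξ) * (1 - coth (a * ξ) ^ 2))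
          + 2 * α * A * a * (1 - coth (a * ξ) ^ 2)
          + α ^ 2 * (A * coth (a * ξ) + B)) * Real.exp (α * ξ + d) := by
  have ha : a ≠ 0 := fun h => hξ (by simp [h])
  have hξ0 : ξ ≠ 0 := fun h => hξ (by simp [h])
  have hfd : ∀ s : ℝ, s ≠ 0 →
      HasDerivAt (fun s => (A * coth (a * s) + B) * Real.exp (α * s + d))
        ((A * (a * (1 - coth (a * s) ^ 2)) + α * (A * coth (a * s) + B)) *
          Real.exp (α * s + d)) s := by
    intro s hs
    have hc := hasDerivAt_coth_comp a (mul_ne_zero ha hs)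
    have he := hasDerivAt_exp_affine α d s
    have := ((hc.const_mul A).add_const B).mul he
    refine this.congr_deriv ?_
    ring
  have hev : deriv (fun s => (A * coth (a * s) + B) * Real.exp (α * s + d)) =ᶠ[nhds ξ]
      fun s => (A * (a * (1 - coth (a * s) ^ 2)) + α * (A * coth (a * s) + B)) *
        Real.exp (α * s + d) := by
    filter_upwards [isOpen_ne.mem_nhds hξ0] with s hs
    exact (hfd s hs).deriv
  rw [hev.deriv_eq]
  have hc := hasDerivAt_coth_comp a hξ
  have he := hasDerivAt_exp_affine α d ξ
  have hg : HasDerivAt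
      (fun s => A * (a * (1 - coth (a * s) ^ 2)) + α * (A * coth (a * s) + B))
      (A * (a * (-(2 * coth (a * ξ) * (a * (1 - coth (a * ξ) ^ 2))))) +
        α * (A * (a * (1 - coth (a * ξ) ^ 2)))) ξ := by
    have hsq : HasDerivAt (fun s => coth (a * s) ^ 2)
        (2 * coth (a * ξ) * (a * (1 - coth (a * ξ) ^ 2))) ξ := by
      have := hc.pow 2
      refine this.congr_deriv ?_
      ring
    have h := ((((hsq.const_sub 1).const_mul a).const_mul A).add
      (((hc.const_mul A).add_const B).const_mul α))
    exact h.congr_deriv (by ring)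
  have := (hg.mul he).deriv
  simp only [Pi.mul_def] at this
  rw [this]
  ring

lemma second_deriv_y (C β e : ℝ) (y : ℝ) :
    deriv (deriv fun s => C * Real.exp (β * s + e)) y
      = β ^ 2 * (C * Real.exp (β * y + e)) := by
  have h : ∀ s : ℝ, HasDerivAt (fun t => C * Real.exp (β * t + e))
      ((C * β) * Real.exp (β * s + e)) s := by
    intro s
    have := (hasDerivAt_exp_affine β e s).const_mul C
    refine this.congr_deriv ?_
    ring
  have h1 : deriv (fun s => C * Real.exp (β * s + e))
      = fun s => (C * β) * Real.exp (β * s + e) := funext fun s => (h s).deriv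
  rw [h1, ((hasDerivAt_exp_affine β e y).const_mul (C * β)).deriv]
  ring

lemma component (a A B α β : ℝ) {ξ : ℝ} (hξ : a * ξ ≠ 0) (y : ℝ)
    (h1 : a * B = -(α * A)) (h2 : α ^ 2 + β ^ 2 = 4 * a ^ 2 / 3) :
    deriv (deriv fun s => (A * coth (a * s) + B) * Real.exp (α * s + β * y)) ξ
      + deriv (deriv fun s => (A * coth (a * ξ) + B) * Real.exp (α * ξ + β * s)) y
      = (2 * a ^ 2) * ((coth (a * ξ)) ^ 2 - 1 / 3) *
          ((A * coth (a * ξ) + B) * Real.exp (α * ξ + β * y)) := by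
  rw [second_deriv_x a A B α (β * y) hξ]
  have hy : (fun s => (A * coth (a * ξ) + B) * Real.exp (α * ξ + β * s))
      = fun s => (A * coth (a * ξ) + B) * Real.exp (β * s + α * ξ) := by
    funext s; rw [add_comm (α * ξ)]
  rw [hy, second_deriv_y, show β * y + α * ξ = α * ξ + β * y from add_comm _ _]
  linear_combination Real.exp (α * ξ + β * y) * (2 * a - 2 * a * (coth (a * ξ)) ^ 2) * h1
    + Real.exp (α * ξ + β * y) * (A * coth (a * ξ) + B) * h2


/-- The isothermal parametrization (case `c = −2(p+q)`, `s = −1`) of the complete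
hyperbolic affine sphere asymptotic to the cone
`{x : x₂ ≤ x₁^{1/p} x₃^{1/q}}` (case 3 of Hildebrand's classification), up to a sign
change in the second coordinate; here `a = √(p²−p+1)/(2√(p−1))`. -/
noncomputable def r (p a ξ y : ℝ) : Fin 3 → ℝ :=
  ![ (1 / Real.sqrt (3 * (p - 1))) * (Real.sqrt (p ^ 2 - p + 1) * coth (a * ξ) - 1) *
       Real.exp (ξ / (2 * Real.sqrt (p - 1)) +
         (2 * p - 1) * y / (2 * Real.sqrt (3 * (p - 1)))),
     (1 / Real.sqrt (3 * (p - 1))) * (Real.sqrt (p ^ 2 - p + 1) * coth (a * ξ) - (p - 1)) *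
       Real.exp ((Real.sqrt (p - 1) / 2) * ξ -
         (p + 1) * y / (2 * Real.sqrt (3 * (p - 1)))),
     -(1 / (Real.sqrt 3 * p)) * (Real.sqrt (p ^ 2 - p + 1) * coth (a * ξ) + p) *
       Real.exp (-(p / (2 * Real.sqrt (p - 1))) * ξ -
         (p - 2) * y / (2 * Real.sqrt (3 * (p - 1)))) ]

/-- Each component satisfies the affine-sphere equation
`Δ r = ((p²−p+1)/(2(p−1))) (coth²(a ξ) − 1/3) r`. -/
theorem case3_affine_sphere_laplace (p : ℝ) (hp : 2 ≤ p)
    (a : ℝ) (ha : a = Real.sqrt (p ^ 2 - p + 1) / (2 * Real.sqrt (p - 1))) :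
    ∀ ξ : ℝ, ξ ≠ 0 → ∀ y : ℝ, ∀ i : Fin 3,
      deriv (deriv fun s => r p a s y i) ξ + deriv (deriv fun s => r p a ξ s i) y
        = ((p ^ 2 - p + 1) / (2 * (p - 1))) * ((coth (a * ξ)) ^ 2 - 1 / 3) * r p a ξ y i := by
  intro ξ hξ y i
  have hp1 : (0:ℝ) < p - 1 := by linarith
  have hppos : (0:ℝ) < p := by linarith
  have hu : 0 < Real.sqrt (p - 1) := Real.sqrt_pos.mpr hp1
  have hu2 : Real.sqrt (p - 1) ^ 2 = p - 1 := Real.sq_sqrt hp1.le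
  have hvpos : (0:ℝ) < p ^ 2 - p + 1 := by nlinarith
  have hv : 0 < Real.sqrt (p ^ 2 - p + 1) := Real.sqrt_pos.mpr hvpos
  have hv2 : Real.sqrt (p ^ 2 - p + 1) ^ 2 = p ^ 2 - p + 1 := Real.sq_sqrt hvpos.le
  have hw : (0:ℝ) < Real.sqrt 3 := Real.sqrt_pos.mpr (by norm_num)
  have hw2 : Real.sqrt 3 ^ 2 = 3 := Real.sq_sqrt (by norm_num)
  have hW : Real.sqrt (3 * (p - 1)) = Real.sqrt 3 * Real.sqrt (p - 1) :=
    Real.sqrt_mul (by norm_num) _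
  have hapos : 0 < a := by
    rw [ha]; positivity
  have haξ : a * ξ ≠ 0 := mul_ne_zero hapos.ne' hξ
  have hK : (p ^ 2 - p + 1) / (2 * (p - 1)) = 2 * a ^ 2 := by
    rw [ha, div_pow, mul_pow, hv2, hu2]
    field_simp
  set U := Real.sqrt (p - 1)
  set V := Real.sqrt (p ^ 2 - p + 1)
  set w := Real.sqrt 3
  fin_cases i
  · -- component 0
    show deriv (deriv fun s => r p a s y 0) ξ + deriv (deriv fun s => r p a ξ s 0) y
      = (p ^ 2 - p + 1) / (2 * (p - 1)) * (coth (a * ξ) ^ 2 - 1 / 3) * r p a ξ y 0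
    have hx : (fun s => r p a s y 0)
        = fun s => ((V / (w * U)) * coth (a * s) + (-(1 / (w * U)))) *
            Real.exp ((1 / (2 * U)) * s + ((2 * p - 1) / (2 * (w * U))) * y) := by
      funext s
      simp only [r, Matrix.cons_val_zero]
      rw [hW]
      rw [show s / (2 * U) + (2 * p - 1) * y / (2 * (w * U))
            = (1 / (2 * U)) * s + ((2 * p - 1) / (2 * (w * U))) * y from by ring]
      ring
    have hy : (fun s => r p a ξ s 0)
        = fun s => ((V / (w * U)) * coth (a * ξ) + (-(1 / (w * U)))) *
            Real.exp ((1 / (2 * U)) * ξ + ((2 * p - 1) / (2 * (w * U))) * s) := by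
      funext s
      simp only [r, Matrix.cons_val_zero]
      rw [hW]
      rw [show ξ / (2 * U) + (2 * p - 1) * s / (2 * (w * U))
            = (1 / (2 * U)) * ξ + ((2 * p - 1) / (2 * (w * U))) * s from by ring]
      ring
    have hpt : r p a ξ y 0
        = ((V / (w * U)) * coth (a * ξ) + (-(1 / (w * U)))) *
            Real.exp ((1 / (2 * U)) * ξ + ((2 * p - 1) / (2 * (w * U))) * y) := by
      simp only [r, Matrix.cons_val_zero]
      rw [hW]
      rw [show ξ / (2 * U) + (2 * p - 1) * y / (2 * (w * U))
            = (1 / (2 * U)) * ξ + ((2 * p - 1) / (2 * (w * U))) * y from by ring]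
      ring
    rw [hx, hy, hpt, hK]
    apply component a _ _ _ _ haξ y
    · rw [ha]
      field_simp
    · rw [ha]
      field_simp
      linear_combination (3 - 4*V^2) * hw2 - 12 * hv2
  · -- component 1
    show deriv (deriv fun s => r p a s y 1) ξ + deriv (deriv fun s => r p a ξ s 1) y
      = (p ^ 2 - p + 1) / (2 * (p - 1)) * (coth (a * ξ) ^ 2 - 1 / 3) * r p a ξ y 1
    have hx : (fun s => r p a s y 1)
        = fun s => ((V / (w * U)) * coth (a * s) + (-((p - 1) / (w * U)))) *
            Real.exp ((U / 2) * s + (-((p + 1) / (2 * (w * U)))) * y) := by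
      funext s
      simp only [r, Matrix.cons_val_one, Matrix.cons_val_zero, Matrix.head_cons]
      rw [hW]
      rw [show (U / 2) * s - (p + 1) * y / (2 * (w * U))
            = (U / 2) * s + (-((p + 1) / (2 * (w * U)))) * y from by ring]
      ring
    have hy : (fun s => r p a ξ s 1)
        = fun s => ((V / (w * U)) * coth (a * ξ) + (-((p - 1) / (w * U)))) *
            Real.exp ((U / 2) * ξ + (-((p + 1) / (2 * (w * U)))) * s) := by
      funext s
      simp only [r, Matrix.cons_val_one, Matrix.cons_val_zero, Matrix.head_cons]
      rw [hW]
      rw [show (U / 2) * ξ - (p + 1) * s / (2 * (w * U))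
            = (U / 2) * ξ + (-((p + 1) / (2 * (w * U)))) * s from by ring]
      ring
    have hpt : r p a ξ y 1
        = ((V / (w * U)) * coth (a * ξ) + (-((p - 1) / (w * U)))) *
            Real.exp ((U / 2) * ξ + (-((p + 1) / (2 * (w * U)))) * y) := by
      simp only [r, Matrix.cons_val_one, Matrix.cons_val_zero, Matrix.head_cons]
      rw [hW]
      rw [show (U / 2) * ξ - (p + 1) * y / (2 * (w * U))
            = (U / 2) * ξ + (-((p + 1) / (2 * (w * U)))) * y from by ring]
      ring
    rw [hx, hy, hpt, hK]
    apply component a _ _ _ _ haξ y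
    · rw [ha]
      field_simp
      linear_combination hu2
    · rw [ha]
      field_simp
      linear_combination (3*U^4 - 4*V^2) * hw2 + 9*(U^2 + (p-1)) * hu2 - 12 * hv2
  · -- component 2
    show deriv (deriv fun s => r p a s y 2) ξ + deriv (deriv fun s => r p a ξ s 2) y
      = (p ^ 2 - p + 1) / (2 * (p - 1)) * (coth (a * ξ) ^ 2 - 1 / 3) * r p a ξ y 2
    have hx : (fun s => r p a s y 2)
        = fun s => ((-(V / (w * p))) * coth (a * s) + (-(p / (w * p)))) *
            Real.exp ((-(p / (2 * U))) * s + (-((p - 2) / (2 * (w * U)))) * y) := by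
      funext s
      simp only [r, Matrix.cons_val_two, Matrix.tail_cons, Matrix.head_cons]
      rw [hW]
      rw [show -(p / (2 * U)) * s - (p - 2) * y / (2 * (w * U))
            = (-(p / (2 * U))) * s + (-((p - 2) / (2 * (w * U)))) * y from by ring]
      ring
    have hy : (fun s => r p a ξ s 2)
        = fun s => ((-(V / (w * p))) * coth (a * ξ) + (-(p / (w * p)))) *
            Real.exp ((-(p / (2 * U))) * ξ + (-((p - 2) / (2 * (w * U)))) * s) := by
      funext s
      simp only [r, Matrix.cons_val_two, Matrix.tail_cons, Matrix.head_cons]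
      rw [hW]
      rw [show -(p / (2 * U)) * ξ - (p - 2) * s / (2 * (w * U))
            = (-(p / (2 * U))) * ξ + (-((p - 2) / (2 * (w * U)))) * s from by ring]
      ring
    have hpt : r p a ξ y 2
        = ((-(V / (w * p))) * coth (a * ξ) + (-(p / (w * p)))) *
            Real.exp ((-(p / (2 * U))) * ξ + (-((p - 2) / (2 * (w * U)))) * y) := by
      simp only [r, Matrix.cons_val_two, Matrix.tail_cons, Matrix.head_cons]
      rw [hW]
      rw [show -(p / (2 * U)) * ξ - (p - 2) * y / (2 * (w * U))
            = (-(p / (2 * U))) * ξ + (-((p - 2) / (2 * (w * U)))) * y from by ring]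
      ring
    rw [hx, hy, hpt, hK]
    apply component a _ _ _ _ haξ y
    · rw [ha]
      field_simp
    · rw [ha]
      field_simp
      linear_combination (3*p^2 - 4*V^2) * hw2 - 12 * hv2
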